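/- Let A be a finite non-associative relation algebra. A has a feeble representation if and only if there is a consistent atomic network (N,λ) over A such that for every atom a of A there exist nodes x,y ∈ N with λ(x,y) = a. -/

import Mathlib

/-- A non-associative relation algebra: a boolean algebra with normal additive
involuted-monoid operators satisfying the Peircean law. -/
class NAAlg (α : Type*) extends BooleanAlgebra α where
  comp : α → α → α
  conv : α → α
  ident : α
  comp_ident : ∀ x : α, comp x ident = x
  ident_comp : ∀ x : α, comp ident x = x
  conv_conv : ∀ x : α, conv (conv x) = x
  conv_comp : ∀ x y : α, conv (comp x y) = comp (conv y) (conv x)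
  conv_bot : conv ⊥ = ⊥
  comp_bot : ∀ x : α, comp x ⊥ = ⊥
  conv_sup : ∀ x y : α, conv (x ⊔ y) = conv x ⊔ conv y
  comp_sup : ∀ x y z : α, comp x (y ⊔ z) = comp x y ⊔ comp x z
  peirce : ∀ x y z : α, comp x y ⊓ conv z = ⊥ ↔ comp y z ⊓ conv x = ⊥

/-- Composition of binary relations. -/
def rcomp {D : Type*} (r s : Set (D × D)) : Set (D × D) :=
  {p | ∃ z, (p.1, z) ∈ r ∧ (z, p.2) ∈ s}

/-- A feeble representation of a non-associative relation algebra: no minimality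
of weak composition is required, only containment of the true composition. -/
structure IsFeebleRep {α D : Type*} [NAAlg α] (φ : α → Set (D × D)) : Prop where
  map_bot : φ ⊥ = ∅
  map_top : φ ⊤ = Set.univ
  map_sup : ∀ a b : α, φ (a ⊔ b) = φ a ∪ φ b
  map_compl : ∀ a : α, φ aᶜ = Set.univ \ φ a
  map_ident : φ NAAlg.ident = {p : D × D | p.1 = p.2}
  map_conv : ∀ a : α, φ (NAAlg.conv a) = {p : D × D | (p.2, p.1) ∈ φ a}
  feeble : ∀ a b : α, rcomp (φ a) (φ b) ⊆ φ (NAAlg.comp a b)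
  nonempty_of_ne_bot : ∀ a : α, a ≠ ⊥ → φ a ≠ ∅

namespace NAAlgAux
open NAAlg
variable {α : Type*} [NAAlg α]

lemma conv_mono {a b : α} (h : a ≤ b) : conv a ≤ conv b := by
  have h2 : conv b = conv a ⊔ conv b := by rw [← conv_sup, sup_eq_right.2 h]
  exact le_sup_left.trans h2.ge

lemma conv_le_iff {a b : α} : conv a ≤ b ↔ a ≤ conv b := by
  constructor
  · intro h; have := conv_mono h; rwa [conv_conv] at this
  · intro h; have := conv_mono h; rwa [conv_conv] at this

lemma conv_ident : (conv ident : α) = ident := by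
  have key : ∀ y : α, comp y (conv ident) = y := by
    intro y
    calc comp y (conv ident) = comp (conv (conv y)) (conv ident) := by rw [conv_conv]
    _ = conv (comp ident (conv y)) := by rw [conv_comp]
    _ = conv (conv y) := by rw [ident_comp]
    _ = y := conv_conv y
  calc (conv ident : α) = comp ident (conv ident) := (ident_comp _).symm
  _ = ident := key ident

lemma comp_sup' (x y z : α) : comp (x ⊔ y) z = comp x z ⊔ comp y z := by
  have : conv (comp (x ⊔ y) z) = conv (comp x z ⊔ comp y z) := by
    rw [conv_comp, conv_sup, comp_sup, conv_sup, conv_comp, conv_comp]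
  have := congrArg conv this
  rwa [conv_conv, conv_conv] at this

lemma comp_mono {a b c d : α} (h1 : a ≤ c) (h2 : b ≤ d) : comp a b ≤ comp c d := by
  have e1 : comp c b = comp a b ⊔ comp c b := by
    rw [← comp_sup', sup_eq_right.2 h1]
  have e2 : comp c d = comp c b ⊔ comp c d := by
    rw [← comp_sup, sup_eq_right.2 h2]
  exact (le_sup_left.trans e1.ge).trans (le_sup_left.trans e2.ge)

lemma conv_eq_bot_iff {a : α} : conv a = ⊥ ↔ a = ⊥ := by
  constructor
  · intro h; have := congrArg conv h; rwa [conv_conv, conv_bot] at this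
  · intro h; rw [h, conv_bot]

lemma isAtom_conv {a : α} (h : IsAtom a) : IsAtom (conv a) := by
  constructor
  · simpa [conv_eq_bot_iff] using h.1
  · intro b hb
    rw [← conv_eq_bot_iff]
    refine h.2 _ ?_
    have hle : conv b ≤ a := by
      have := conv_mono hb.le; rwa [conv_conv] at this
    exact lt_of_le_of_ne hle (fun he => hb.ne (by rw [← he, conv_conv]))

lemma atom_le_of_inf_ne_bot {a b : α} (h : IsAtom a) (hne : a ⊓ b ≠ ⊥) : a ≤ b := by
  rcases lt_or_eq_of_le (inf_le_left : a ⊓ b ≤ a) with hlt | heq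
  · exact absurd (h.2 _ hlt) hne
  · exact heq ▸ inf_le_right

lemma atom_eq_of_inf_ne_bot {a b : α} (ha : IsAtom a) (hb : IsAtom b)
    (hne : a ⊓ b ≠ ⊥) : a = b := by
  have h1 := atom_le_of_inf_ne_bot ha hne
  have h2 := atom_le_of_inf_ne_bot hb (by rwa [inf_comm])
  exact le_antisymm h1 h2

lemma atom_le_sup {a b c : α} (h : IsAtom a) (hle : a ≤ b ⊔ c) : a ≤ b ∨ a ≤ c := by
  by_cases hb : a ⊓ b = ⊥
  · right
    refine atom_le_of_inf_ne_bot h ?_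
    intro hc
    have : a = a ⊓ (b ⊔ c) := (inf_eq_left.2 hle).symm
    rw [inf_sup_left, hb, hc, sup_idem] at this
    exact h.1 this
  · exact Or.inl (atom_le_of_inf_ne_bot h hb)

lemma atom_le_compl_iff {a b : α} (h : IsAtom a) : a ≤ bᶜ ↔ ¬ a ≤ b := by
  constructor
  · intro h1 h2
    have h3 := le_inf h2 h1
    rw [inf_compl_eq_bot, le_bot_iff] at h3
    exact h.1 h3
  · intro h1
    rw [le_compl_iff_disjoint_right, disjoint_iff]
    by_contra hc
    exact h1 (atom_le_of_inf_ne_bot h hc)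

lemma exists_atom_le [Finite α] {b : α} (hb : b ≠ ⊥) : ∃ a, IsAtom a ∧ a ≤ b :=
  (IsAtomic.eq_bot_or_exists_atom_le b).resolve_left hb

section Rep
variable {D : Type*} {φ : α → Set (D × D)} (h : IsFeebleRep φ)
include h

lemma rep_inf (a b : α) : φ (a ⊓ b) = φ a ∩ φ b := by
  have : a ⊓ b = (aᶜ ⊔ bᶜ)ᶜ := by simp
  rw [this, h.map_compl, h.map_sup, h.map_compl, h.map_compl]
  ext p
  simp only [Set.mem_diff, Set.mem_union, Set.mem_univ, true_and, Set.mem_inter_iff]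
  tauto

lemma rep_mono {a b : α} (hle : a ≤ b) : φ a ⊆ φ b := by
  have : φ b = φ a ∪ φ b := by rw [← h.map_sup, sup_eq_right.2 hle]
  rw [this]; exact Set.subset_union_left

lemma rep_finsetSup (s : Finset α) : φ (s.sup id) = ⋃ a ∈ s, φ a := by
  classical
  induction s using Finset.induction with
  | empty => simp [h.map_bot]
  | insert _ _ hx ih =>
      rw [Finset.sup_insert, h.map_sup, ih]
      simp

end Rep
end NAAlgAux

open NAAlg NAAlgAux in
theorem stmt15 {α : Type} [NAAlg α] [Fintype α] :
    (∃ (D : Type) (φ : α → Set (D × D)), IsFeebleRep φ) ↔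
    (∃ (N : Type) (_ : Fintype N) (lam : N → N → α),
      (∀ x : N, lam x x ≤ NAAlg.ident) ∧
      (∀ x y z : N, NAAlg.comp (lam x y) (lam y z) ⊓ lam x z ≠ ⊥) ∧
      (∀ x y : N, lam x y ⊓ NAAlg.conv (lam y x) ≠ ⊥) ∧
      (∀ x y : N, lam x y ≠ ⊥) ∧
      (∀ x y : N, IsAtom (lam x y)) ∧
      (∀ a : α, IsAtom a → ∃ x y : N, lam x y = a)) := by
  classical
  constructor
  · rintro ⟨D, φ, h⟩
    by_cases hat : ∃ a : α, IsAtom a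
    swap
    · refine ⟨Empty, inferInstance, fun x _ => x.elim, ?_, ?_, ?_, ?_, ?_, ?_⟩ <;>
        first
          | (intro x; exact x.elim)
          | (intro a ha; exact absurd ⟨a, ha⟩ hat)
    -- every pair lies in the image of a unique atom
    · have exists_atom_mem : ∀ p : D × D, ∃ a : α, IsAtom a ∧ p ∈ φ a := by
        intro p
        set S : Finset α := Finset.univ.filter IsAtom with hS
        have hsup : S.sup id = ⊤ := by
          by_contra hne
          have hcne : (S.sup id)ᶜ ≠ ⊥ := fun hc => hne (by rwa [compl_eq_bot] at hc)
          obtain ⟨a, ha, hle⟩ := exists_atom_le hcne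
          have hmem : a ∈ S := by simp [hS, ha]
          have : a ≤ S.sup id := Finset.le_sup (f := id) hmem
          have hb2 := le_inf this hle
          rw [inf_compl_eq_bot, le_bot_iff] at hb2
          exact ha.1 hb2
        have hp : p ∈ φ (S.sup id) := by
          rw [hsup, h.map_top]; trivial
        rw [rep_finsetSup h] at hp
        simp only [Set.mem_iUnion] at hp
        obtain ⟨a, ha, hpa⟩ := hp
        exact ⟨a, by simpa [hS] using ha, hpa⟩
      have uniq : ∀ (p : D × D) (a b : α), IsAtom a → IsAtom b → p ∈ φ a → p ∈ φ b →
          a = b := by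
        intro p a b ha hb hpa hpb
        refine atom_eq_of_inf_ne_bot ha hb ?_
        intro hbot
        have : p ∈ φ (a ⊓ b) := by rw [rep_inf h]; exact ⟨hpa, hpb⟩
        rw [hbot, h.map_bot] at this
        exact this
      set atomAt : D × D → α := fun p => Classical.choose (exists_atom_mem p) with hAt
      have atomAt_spec : ∀ p, IsAtom (atomAt p) ∧ p ∈ φ (atomAt p) := fun p =>
        Classical.choose_spec (exists_atom_mem p)
      -- witnesses for atoms
      have exists_pt : ∀ a : {a : α // IsAtom a}, ∃ p : D × D, p ∈ φ a.1 := by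
        intro a
        have := h.nonempty_of_ne_bot a.1 a.2.1
        rcases Set.nonempty_iff_ne_empty.2 this with ⟨p, hp⟩
        exact ⟨p, hp⟩
      set pt : {a : α // IsAtom a} → D × D := fun a => Classical.choose (exists_pt a)
        with hpt
      have pt_spec : ∀ a, pt a ∈ φ a.1 := fun a => Classical.choose_spec (exists_pt a)
      set N := {a : α // IsAtom a} × Bool with hN
      set f : N → D := fun u => if u.2 then (pt u.1).1 else (pt u.1).2 with hf
      set lam : N → N → α := fun u v => atomAt (f u, f v) with hlam
      have lam_atom : ∀ u v : N, IsAtom (lam u v) := fun u v => (atomAt_spec _).1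
      have lam_mem : ∀ u v : N, (f u, f v) ∈ φ (lam u v) := fun u v => (atomAt_spec _).2
      refine ⟨N, inferInstance, lam, ?_, ?_, ?_, ?_, lam_atom, ?_⟩
      · intro x
        refine atom_le_of_inf_ne_bot (lam_atom x x) ?_
        intro hbot
        have hmem : (f x, f x) ∈ φ (lam x x ⊓ ident) := by
          rw [rep_inf h]
          exact ⟨lam_mem x x, by rw [h.map_ident]; rfl⟩
        rw [hbot, h.map_bot] at hmem; exact hmem
      · intro x y z hbot
        have h1 : (f x, f z) ∈ φ (comp (lam x y) (lam y z)) :=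
          h.feeble _ _ ⟨f y, lam_mem x y, lam_mem y z⟩
        have hmem : (f x, f z) ∈ φ (comp (lam x y) (lam y z) ⊓ lam x z) := by
          rw [rep_inf h]; exact ⟨h1, lam_mem x z⟩
        rw [hbot, h.map_bot] at hmem; exact hmem
      · intro x y hbot
        have h1 : (f x, f y) ∈ φ (conv (lam y x)) := by
          rw [h.map_conv]; exact lam_mem y x
        have hmem : (f x, f y) ∈ φ (lam x y ⊓ conv (lam y x)) := by
          rw [rep_inf h]; exact ⟨lam_mem x y, h1⟩
        rw [hbot, h.map_bot] at hmem; exact hmem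
      · intro x y; exact (lam_atom x y).1
      · intro a ha
        refine ⟨(⟨a, ha⟩, true), (⟨a, ha⟩, false), ?_⟩
        have hfp : (f (⟨a, ha⟩, true), f (⟨a, ha⟩, false)) = pt ⟨a, ha⟩ := by
          simp [hf]
        have hmem : (f (⟨a, ha⟩, true), f (⟨a, ha⟩, false)) ∈ φ a := by
          rw [hfp]; exact pt_spec ⟨a, ha⟩
        exact uniq _ _ _ (lam_atom _ _) ha (lam_mem _ _) hmem
  · rintro ⟨N, _, lam, hdiag, hcomp, hconv, hne, hatom, hall⟩
    -- conv of labels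
    have lam_conv : ∀ x y : N, conv (lam x y) = lam y x := by
      intro x y
      exact (atom_eq_of_inf_ne_bot (hatom y x) (isAtom_conv (hatom x y)) (hconv y x)).symm
    -- setoid
    have symm_r : ∀ {x y : N}, lam x y ≤ ident → lam y x ≤ ident := by
      intro x y hxy
      refine atom_le_of_inf_ne_bot (hatom y x) ?_
      intro hbot
      refine hconv y x ?_
      have : conv (lam x y) ≤ ident := by
        have := conv_mono hxy
        rwa [conv_ident] at this
      exact le_bot_iff.1 ((inf_le_inf_left _ this).trans hbot.le)
    have left_inv : ∀ {x x' y : N}, lam x' x ≤ ident → lam x' y = lam x y := by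
      intro x x' y hx
      refine atom_eq_of_inf_ne_bot (hatom x' y) (hatom x y) ?_
      intro hbot
      refine hcomp x' x y ?_
      have hle : comp (lam x' x) (lam x y) ≤ lam x y := by
        calc comp (lam x' x) (lam x y) ≤ comp ident (lam x y) :=
              comp_mono hx le_rfl
        _ = lam x y := ident_comp _
      have : comp (lam x' x) (lam x y) ⊓ lam x' y ≤ lam x' y ⊓ lam x y :=
        le_inf inf_le_right ((inf_le_left).trans hle)
      rw [hbot] at this
      exact le_bot_iff.1 this
    have right_inv : ∀ {x y y' : N}, lam y y' ≤ ident → lam x y' = lam x y := by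
      intro x y y' hy
      refine atom_eq_of_inf_ne_bot (hatom x y') (hatom x y) ?_
      intro hbot
      refine hcomp x y y' ?_
      have hle : comp (lam x y) (lam y y') ≤ lam x y :=
        (comp_mono le_rfl hy).trans_eq (comp_ident _)
      have : comp (lam x y) (lam y y') ⊓ lam x y' ≤ lam x y' ⊓ lam x y :=
        le_inf inf_le_right ((inf_le_left).trans hle)
      rw [hbot] at this
      exact le_bot_iff.1 this
    have trans_r : ∀ {x y z : N}, lam x y ≤ ident → lam y z ≤ ident → lam x z ≤ ident := by
      intro x y z hxy hyz
      have : lam x z = lam x y := right_inv hyz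
      rw [this]; exact hxy
    let s : Setoid N := ⟨fun x y => lam x y ≤ ident,
      ⟨fun x => hdiag x, fun h => symm_r h, fun h1 h2 => trans_r h1 h2⟩⟩
    let D := Quotient s
    have lam_invar : ∀ (x y x' y' : N), lam x x' ≤ ident → lam y y' ≤ ident →
        lam x y = lam x' y' := by
      intro x y x' y' hx hy
      have h1 : lam x' y = lam x y := left_inv (symm_r hx)
      have h2 : lam x' y' = lam x' y := right_inv hy
      rw [h2, h1]
    let L : D → D → α := Quotient.lift₂ lam (fun a b a' b' ha hb => lam_invar a b a' b' ha hb)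
    have Lmk : ∀ x y : N, L ⟦x⟧ ⟦y⟧ = lam x y := fun _ _ => rfl
    have L_atom : ∀ p q : D, IsAtom (L p q) := by
      intro p q
      obtain ⟨x, rfl⟩ := Quotient.exists_rep p
      obtain ⟨y, rfl⟩ := Quotient.exists_rep q
      exact hatom x y
    refine ⟨D, fun a => {p : D × D | L p.1 p.2 ≤ a}, ?_, ?_, ?_, ?_, ?_, ?_, ?_, ?_⟩
    · ext p
      simp only [Set.mem_setOf_eq, Set.mem_empty_iff_false, iff_false, le_bot_iff]
      exact (L_atom p.1 p.2).1
    · ext p; simp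
    · intro a b
      ext p
      simp only [Set.mem_setOf_eq, Set.mem_union]
      constructor
      · exact fun hle => atom_le_sup (L_atom p.1 p.2) hle
      · rintro (hh | hh)
        · exact hh.trans le_sup_left
        · exact hh.trans le_sup_right
    · intro a
      ext p
      simp only [Set.mem_setOf_eq, Set.mem_diff, Set.mem_univ, true_and]
      exact atom_le_compl_iff (L_atom p.1 p.2)
    · ext p
      obtain ⟨x, hx⟩ := Quotient.exists_rep p.1
      obtain ⟨y, hy⟩ := Quotient.exists_rep p.2
      simp only [Set.mem_setOf_eq, ← hx, ← hy, Lmk]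
      constructor
      · intro hle; exact Quotient.sound hle
      · intro heq; exact Quotient.exact heq
    · intro a
      ext p
      obtain ⟨x, hx⟩ := Quotient.exists_rep p.1
      obtain ⟨y, hy⟩ := Quotient.exists_rep p.2
      simp only [Set.mem_setOf_eq, ← hx, ← hy, Lmk]
      rw [← lam_conv y x]
      constructor
      · intro hle
        have := conv_mono hle
        rwa [conv_conv, conv_conv] at this
      · intro hle
        exact conv_mono hle
    · intro a b p hp
      obtain ⟨q, hq1, hq2⟩ := hp
      obtain ⟨x, hx⟩ := Quotient.exists_rep p.1
      obtain ⟨y, hy⟩ := Quotient.exists_rep p.2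
      obtain ⟨z, hz⟩ := Quotient.exists_rep q
      simp only [Set.mem_setOf_eq, ← hx, ← hz, Lmk] at hq1
      simp only [Set.mem_setOf_eq, ← hy, ← hz, Lmk] at hq2
      simp only [Set.mem_setOf_eq, ← hx, ← hy, Lmk]
      refine atom_le_of_inf_ne_bot (hatom x y) ?_
      intro hbot
      refine hcomp x z y ?_
      have hle : comp (lam x z) (lam z y) ≤ comp a b := comp_mono hq1 hq2
      have : comp (lam x z) (lam z y) ⊓ lam x y ≤ lam x y ⊓ comp a b :=
        le_inf inf_le_right (inf_le_left.trans hle)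
      rw [hbot] at this
      exact le_bot_iff.1 this
    · intro a ha
      obtain ⟨b, hb, hle⟩ := exists_atom_le ha
      obtain ⟨x, y, hxy⟩ := hall b hb
      intro hempty
      have : (⟦x⟧, ⟦y⟧) ∈ ({p : D × D | L p.1 p.2 ≤ a}) := by
        show lam x y ≤ a
        rw [hxy]; exact hle
      rw [hempty] at this
      exact this
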